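/- Let Φ be a finite reduced crystallographic root system with base S whose Dynkin diagram is connected, i.e. S cannot be partitioned into two nonempty subsets that are mutually orthogonal, and let s be a folding of S. Then either s is an automorphism of the Dynkin diagram, i.e. ⟨sα|sβ∨⟩ = ⟨α|β∨⟩ for all α, β ∈ S, or S consists of exactly three roots γ₁, γ₂, γ₃ with Cartan integers of type B₃, namely ⟨γ₁|γ₂∨⟩ = ⟨γ₃|γ₂∨⟩ = −1, ⟨γ₂|γ₁∨⟩ = −1, ⟨γ₂|γ₃∨⟩ = −2, ⟨γ₁|γ₃∨⟩ = ⟨γ₃|γ₁∨⟩ = 0, and s swaps γ₁ and γ₃ and fixes γ₂. -/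

import Mathlib

set_option maxHeartbeats 1000000


open RealInnerProductSpace

variable {V : Type*} [NormedAddCommGroup V] [InnerProductSpace ℝ V]

/-- The pairing `⟨x | v∨⟩ = 2(x,v)/(v,v)` of a vector against the "coroot" of `v`. -/
noncomputable def pairR (x v : V) : ℝ := 2 * ⟪x, v⟫ / ⟪v, v⟫

/-- The reflection `s_v(x) = x - ⟨x|v∨⟩ v` in the nonzero vector `v`. -/
noncomputable def reflV (v x : V) : V := x - pairR x v • v

/-- A finite reduced crystallographic root system in a real inner product space:
a finite set of nonzero vectors, closed under all of its reflections, with integral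
Cartan numbers, such that the only multiples of a root `α` that are roots are `±α`. -/
def IsRootSystem (Φ : Set V) : Prop :=
  Φ.Finite ∧
  (0 : V) ∉ Φ ∧
  (∀ α ∈ Φ, ∀ β ∈ Φ, reflV α β ∈ Φ) ∧
  (∀ α ∈ Φ, ∀ β ∈ Φ, ∃ n : ℤ, pairR β α = (n : ℝ)) ∧
  (∀ α ∈ Φ, ∀ c : ℝ, c • α ∈ Φ → c • α = α ∨ c • α = -α)

/-- `S` is a base of `Φ`: a linearly independent subset spanning the span of `Φ`
such that every element of `Φ` is an integral linear combination of `S` with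
coefficients all of the same sign. -/
def IsBase (Φ S : Set V) : Prop :=
  S ⊆ Φ ∧
  LinearIndependent ℝ ((↑) : S → V) ∧
  Submodule.span ℝ S = Submodule.span ℝ Φ ∧
  ∀ α ∈ Φ, ∃ c : V →₀ ℤ,
    (↑c.support : Set V) ⊆ S ∧
    α = c.sum (fun v n => (n : ℝ) • v) ∧
    ((∀ v, 0 ≤ c v) ∨ (∀ v, c v ≤ 0))

/-- The positive elements with respect to a base `S`: nonnegative integral
combinations of `S`. -/
def IsPositive (S : Set V) (α : V) : Prop :=
  ∃ c : V →₀ ℤ,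
    (↑c.support : Set V) ⊆ S ∧
    α = c.sum (fun v n => (n : ℝ) • v) ∧
    (∀ v, 0 ≤ c v)

/-- `Ψ` is a root subsystem of `Φ`: a nonempty subset stable under its own reflections. -/
def IsRootSubsystem (Φ Ψ : Set V) : Prop :=
  Ψ ⊆ Φ ∧ Ψ.Nonempty ∧ ∀ ψ ∈ Ψ, ∀ x ∈ Ψ, reflV ψ x ∈ Ψ

/-- `Ψ` is additively closed in `Φ` : `Ψ = Φ ∩ ℤΨ`. -/
def IsAddClosedIn (Φ Ψ : Set V) : Prop :=
  Ψ = Φ ∩ (Submodule.span ℤ Ψ : Set V)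

/-- `s` is a folding of the base `S`: an involution of `S` such that
`⟨α|sα∨⟩ = 0` whenever `sα ≠ α`, and `⟨α - sα | β∨ + sβ∨⟩ = 0` for all `α, β ∈ S`. -/
def IsFolding (S : Set V) (s : V → V) : Prop :=
  (∀ α ∈ S, s α ∈ S) ∧ (∀ α ∈ S, s (s α) = α) ∧
  (∀ α ∈ S, s α ≠ α → pairR α (s α) = 0) ∧
  (∀ α ∈ S, ∀ β ∈ S, pairR (α - s α) β + pairR (α - s α) (s β) = 0)

/- ## helpers -/

lemma expand5 (a b c d e : V) (c1 c2 c3 c4 c5 : ℝ) :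
  ⟪c1•a + c2•b + c3•c + c4•d + c5•e, c1•a + c2•b + c3•c + c4•d + c5•e⟫ =
  c1^2*⟪a,a⟫ + c2^2*⟪b,b⟫ + c3^2*⟪c,c⟫ + c4^2*⟪d,d⟫ + c5^2*⟪e,e⟫
  + 2*c1*c2*⟪a,b⟫ + 2*c1*c3*⟪a,c⟫ + 2*c1*c4*⟪a,d⟫ + 2*c1*c5*⟪a,e⟫
  + 2*c2*c3*⟪b,c⟫ + 2*c2*c4*⟪b,d⟫ + 2*c2*c5*⟪b,e⟫
  + 2*c3*c4*⟪c,d⟫ + 2*c3*c5*⟪c,e⟫ + 2*c4*c5*⟪d,e⟫ := by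
  simp only [inner_add_left, inner_add_right, real_inner_smul_left, real_inner_smul_right]
  rw [real_inner_comm b a, real_inner_comm c a, real_inner_comm d a, real_inner_comm e a,
      real_inner_comm c b, real_inner_comm d b, real_inner_comm e b,
      real_inner_comm d c, real_inner_comm e c, real_inner_comm e d]
  ring

lemma indep5 {S : Set V} (hLI : LinearIndependent ℝ ((↑) : S → V))
    {a b c d e : V} (ha : a ∈ S) (hb : b ∈ S) (hc : c ∈ S) (hd : d ∈ S) (he : e ∈ S)
    (hab : a ≠ b) (hac : a ≠ c) (had : a ≠ d) (hae : a ≠ e)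
    (hbc : b ≠ c) (hbd : b ≠ d) (hbe : b ≠ e) (hcd : c ≠ d) (hce : c ≠ e) (hde : d ≠ e)
    {c1 c2 c3 c4 c5 : ℝ}
    (h : c1•a + c2•b + c3•c + c4•d + c5•e = 0) :
    c1 = 0 ∧ c2 = 0 ∧ c3 = 0 ∧ c4 = 0 ∧ c5 = 0 := by
  classical
  set f : Fin 5 → S := ![⟨a, ha⟩, ⟨b, hb⟩, ⟨c, hc⟩, ⟨d, hd⟩, ⟨e, he⟩] with hf
  have hinj : Function.Injective f := by
    intro i j hij
    fin_cases i <;> fin_cases j <;> simp_all [f, Subtype.ext_iff]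
  have hLI5 : LinearIndependent ℝ (fun i => ((f i : V))) := hLI.comp f hinj
  have := linearIndependent_iff'.1 hLI5 Finset.univ ![c1, c2, c3, c4, c5] ?_
  · exact ⟨this 0 (Finset.mem_univ _), this 1 (Finset.mem_univ _), this 2 (Finset.mem_univ _),
      this 3 (Finset.mem_univ _), this 4 (Finset.mem_univ _)⟩
  · rw [Fin.sum_univ_five]
    simpa [f] using h

lemma indep4 {S : Set V} (hLI : LinearIndependent ℝ ((↑) : S → V))
    {a b c d : V} (ha : a ∈ S) (hb : b ∈ S) (hc : c ∈ S) (hd : d ∈ S)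
    (hab : a ≠ b) (hac : a ≠ c) (had : a ≠ d)
    (hbc : b ≠ c) (hbd : b ≠ d) (hcd : c ≠ d)
    {c1 c2 c3 c4 : ℝ}
    (h : c1•a + c2•b + c3•c + c4•d = 0) :
    c1 = 0 ∧ c2 = 0 ∧ c3 = 0 ∧ c4 = 0 := by
  classical
  set f : Fin 4 → S := ![⟨a, ha⟩, ⟨b, hb⟩, ⟨c, hc⟩, ⟨d, hd⟩] with hf
  have hinj : Function.Injective f := by
    intro i j hij
    fin_cases i <;> fin_cases j <;> simp_all [f, Subtype.ext_iff]
  have hLI4 : LinearIndependent ℝ (fun i => ((f i : V))) := hLI.comp f hinj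
  have := linearIndependent_iff'.1 hLI4 Finset.univ ![c1, c2, c3, c4] ?_
  · exact ⟨this 0 (Finset.mem_univ _), this 1 (Finset.mem_univ _), this 2 (Finset.mem_univ _),
      this 3 (Finset.mem_univ _)⟩
  · rw [Fin.sum_univ_four]
    simpa [f] using h

lemma indep3 {S : Set V} (hLI : LinearIndependent ℝ ((↑) : S → V))
    {a b c : V} (ha : a ∈ S) (hb : b ∈ S) (hc : c ∈ S)
    (hab : a ≠ b) (hac : a ≠ c) (hbc : b ≠ c)
    {c1 c2 c3 : ℝ}
    (h : c1•a + c2•b + c3•c = 0) :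
    c1 = 0 ∧ c2 = 0 ∧ c3 = 0 := by
  classical
  set f : Fin 3 → S := ![⟨a, ha⟩, ⟨b, hb⟩, ⟨c, hc⟩] with hf
  have hinj : Function.Injective f := by
    intro i j hij
    fin_cases i <;> fin_cases j <;> simp_all [f, Subtype.ext_iff]
  have hLI3 : LinearIndependent ℝ (fun i => ((f i : V))) := hLI.comp f hinj
  have := linearIndependent_iff'.1 hLI3 Finset.univ ![c1, c2, c3] ?_
  · exact ⟨this 0 (Finset.mem_univ _), this 1 (Finset.mem_univ _), this 2 (Finset.mem_univ _)⟩
  · rw [Fin.sum_univ_three]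
    simpa [f] using h

lemma indep2 {S : Set V} (hLI : LinearIndependent ℝ ((↑) : S → V))
    {a b : V} (ha : a ∈ S) (hb : b ∈ S) (hab : a ≠ b)
    {c1 c2 : ℝ} (h : c1•a + c2•b = 0) : c1 = 0 ∧ c2 = 0 := by
  classical
  set f : Fin 2 → S := ![⟨a, ha⟩, ⟨b, hb⟩] with hf
  have hinj : Function.Injective f := by
    intro i j hij
    fin_cases i <;> fin_cases j <;> simp_all [f, Subtype.ext_iff]
  have hLI2 : LinearIndependent ℝ (fun i => ((f i : V))) := hLI.comp f hinj
  have := linearIndependent_iff'.1 hLI2 Finset.univ ![c1, c2] ?_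
  · exact ⟨this 0 (Finset.mem_univ _), this 1 (Finset.mem_univ _)⟩
  · rw [Fin.sum_univ_two]
    simpa [f] using h

lemma inner_self_pos' {z : V} (hz : z ≠ 0) : (0:ℝ) < ⟪z,z⟫ :=
  lt_of_le_of_ne real_inner_self_nonneg (fun h => hz (inner_self_eq_zero.1 h.symm))

/-- strict Cauchy–Schwarz for two distinct base elements -/
lemma cs_strict {S : Set V} (hLI : LinearIndependent ℝ ((↑) : S → V))
    {a b : V} (ha : a ∈ S) (hb : b ∈ S) (hab : a ≠ b) (hbz : ⟪b,b⟫ ≠ (0:ℝ)) :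
    ⟪a,b⟫ * ⟪a,b⟫ < ⟪a,a⟫ * ⟪b,b⟫ := by
  have hz : ⟪b,b⟫ • a + (-⟪a,b⟫) • b ≠ 0 := by
    intro h
    exact hbz (indep2 hLI hb ha (Ne.symm hab) (by rw [add_comm] at h; exact h)).2
  have hpos : (0:ℝ) < ⟪⟪b,b⟫ • a + (-⟪a,b⟫) • b, ⟪b,b⟫ • a + (-⟪a,b⟫) • b⟫ :=
    inner_self_pos' hz
  have hexp := expand5 a b b b b (⟪b,b⟫) (-⟪a,b⟫) 0 0 0
  simp only [zero_smul, add_zero, zero_pow, mul_zero, zero_mul] at hexp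
  rw [hexp] at hpos
  have hbb : (0:ℝ) ≤ ⟪b,b⟫ := real_inner_self_nonneg
  nlinarith [hpos, hbb]

/- ## pairR basics -/

lemma pairR_sub (x y v : V) : pairR (x - y) v = pairR x v - pairR y v := by
  unfold pairR
  rw [inner_sub_left]
  ring

lemma pairR_mul_self {x v : V} (hv : ⟪v,v⟫ ≠ (0:ℝ)) : pairR x v * ⟪v,v⟫ = 2 * ⟪x,v⟫ := by
  unfold pairR
  field_simp

lemma pairR_self {v : V} (hv : ⟪v,v⟫ ≠ (0:ℝ)) : pairR v v = 2 := by
  unfold pairR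
  field_simp

lemma pairR_eq_zero_iff {x v : V} (hv : ⟪v,v⟫ ≠ (0:ℝ)) : pairR x v = 0 ↔ ⟪x,v⟫ = 0 := by
  unfold pairR
  constructor
  · intro h
    field_simp at h
    linarith
  · intro h; rw [h]; simp

section RS

variable {Φ S : Set V} (hΦ : IsRootSystem Φ) (hS : IsBase Φ S)
include hΦ hS

lemma inner_self_pos_of_mem {α : V} (hα : α ∈ S) : (0:ℝ) < ⟪α,α⟫ := by
  apply inner_self_pos'
  intro h
  exact hΦ.2.1 (h ▸ hS.1 hα)

lemma pairR_int {α β : V} (hα : α ∈ S) (hβ : β ∈ S) : ∃ n : ℤ, pairR β α = (n:ℝ) :=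
  hΦ.2.2.2.1 α (hS.1 hα) β (hS.1 hβ)

/-- key: distinct base elements have nonpositive inner product -/
lemma inner_nonpos_base {α β : V} (hα : α ∈ S) (hβ : β ∈ S) (hne : α ≠ β) :
    ⟪β,α⟫ ≤ 0 := by
  by_contra hpos
  push_neg at hpos
  have hαα : (0:ℝ) < ⟪α,α⟫ := inner_self_pos_of_mem hΦ hS hα
  obtain ⟨n, hn⟩ := pairR_int hΦ hS hα hβ
  have hn1 : 1 ≤ n := by
    have : (0:ℝ) < (n:ℝ) := by
      rw [← hn]
      unfold pairR
      positivity
    exact_mod_cast this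
  have hrefl : reflV α β ∈ Φ := hΦ.2.2.1 α (hS.1 hα) β (hS.1 hβ)
  have hrefl_eq : reflV α β = β - (n:ℝ) • α := by
    unfold reflV
    rw [hn]
  obtain ⟨c, hsupp, hrepr, hsign⟩ := hS.2.2.2 _ hrefl
  classical
  set cR : V →₀ ℝ := c.mapRange Int.cast Int.cast_zero with hcR
  have hcomb : Finsupp.linearCombination ℝ (id : V → V) cR = β - (n:ℝ) • α := by
    rw [Finsupp.linearCombination_apply, hcR, Finsupp.sum_mapRange_index (by simp)]
    rw [← hrefl_eq, hrepr]
    rfl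
  set l : V →₀ ℝ := cR - Finsupp.single β 1 + Finsupp.single α (n:ℝ) with hl
  have hlcomb : Finsupp.linearCombination ℝ (id : V → V) l = 0 := by
    rw [hl, map_add, map_sub, hcomb, Finsupp.linearCombination_single, Finsupp.linearCombination_single]
    simp
  have hlsupp : l ∈ Finsupp.supported ℝ ℝ S := by
    rw [Finsupp.mem_supported]
    intro v hv
    have hv' : v ∈ l.support := hv
    rw [hl] at hv'
    rcases Finset.mem_union.1 (Finsupp.support_add hv') with h1 | h1
    · rcases Finset.mem_union.1 (Finsupp.support_sub h1) with h2 | h2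
      · have h3 : v ∈ c.support := Finsupp.support_mapRange h2
        exact hsupp h3
      · have := Finsupp.support_single_subset h2
        simp only [Finset.mem_singleton] at this
        exact this ▸ hβ
    · have := Finsupp.support_single_subset h1
      simp only [Finset.mem_singleton] at this
      exact this ▸ hα
  have hl0 : l = 0 := by
    have h2 := linearIndepOn_iff.1 (linearIndependent_subtype_iff.1 ?_) l hlsupp hlcomb
    · exact h2
    · exact hS.2.1
  have hlβ : l β = cR β - 1 := by
    rw [hl]
    simp [Finsupp.single_apply, Finsupp.sub_apply, Finsupp.add_apply, Ne.symm hne, hne]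
  have hlα : l α = cR α + (n:ℝ) := by
    rw [hl]
    simp [Finsupp.single_apply, Finsupp.sub_apply, Finsupp.add_apply, Ne.symm hne, hne]
  have hcβ : (c β : ℝ) = 1 := by
    have : l β = 0 := by rw [hl0]; rfl
    rw [hlβ] at this
    have h4 : cR β = 1 := by linarith
    rw [hcR, Finsupp.mapRange_apply] at h4
    exact h4
  have hcα : (c α : ℝ) = -(n:ℝ) := by
    have : l α = 0 := by rw [hl0]; rfl
    rw [hlα] at this
    have h4 : cR α = -(n:ℝ) := by linarith
    rw [hcR, Finsupp.mapRange_apply] at h4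
    exact h4
  have hcβ' : c β = 1 := by exact_mod_cast hcβ
  have hcα' : c α = -n := by exact_mod_cast hcα
  rcases hsign with h | h
  · have := h α
    omega
  · have := h β
    omega

/-- nonpositive integer version -/
lemma pairR_nonpos_int {α β : V} (hα : α ∈ S) (hβ : β ∈ S) (hne : α ≠ β) :
    ∃ n : ℤ, pairR β α = (n:ℝ) ∧ n ≤ 0 := by
  obtain ⟨n, hn⟩ := pairR_int hΦ hS hα hβ
  refine ⟨n, hn, ?_⟩
  have hαα : (0:ℝ) < ⟪α,α⟫ := inner_self_pos_of_mem hΦ hS hα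
  have hip : ⟪β,α⟫ ≤ 0 := inner_nonpos_base hΦ hS hα hβ hne
  have : (n:ℝ) ≤ 0 := by
    rw [← hn]
    unfold pairR
    apply div_nonpos_of_nonpos_of_nonneg <;> nlinarith
  exact_mod_cast this

end RS

/- ## product bounds -/

section Bounds
variable {S : Set V} (hLI : LinearIndependent ℝ ((↑) : S → V))
include hLI

/-- Cartan product bound: `n N ≤ 3` for the two pairings between distinct base roots. -/
lemma prod_bound {u v : V} (hu : u ∈ S) (hv : v ∈ S) (hne : u ≠ v)
    {n N : ℤ} (h1 : (n:ℝ) * ⟪v,v⟫ = 2 * ⟪u,v⟫) (h2 : (N:ℝ) * ⟪u,u⟫ = 2 * ⟪u,v⟫)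
    (huu : (0:ℝ) < ⟪u,u⟫) : n * N ≤ 3 := by
  set z : V := (2:ℝ)•u + (-(n:ℝ))•v + (0:ℝ)•v + (0:ℝ)•v + (0:ℝ)•v with hz
  have hzne : z ≠ 0 := by
    intro h
    rw [hz] at h
    have h2' : (2:ℝ)•u + ((-(n:ℝ)) + 0 + 0 + 0)•v = 0 := by
      rw [add_smul, add_smul, add_smul]
      rw [← h]; abel
    have := (indep2 hLI hu hv hne h2').1
    norm_num at this
  have hpos := inner_self_pos' hzne
  rw [hz, expand5] at hpos
  have e1 : (n:ℝ)*((n:ℝ) * ⟪v,v⟫) = (n:ℝ)*(2 * ⟪u,v⟫) := by rw [h1]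
  have e2 : (n:ℝ)*((N:ℝ) * ⟪u,u⟫) = (n:ℝ)*(2 * ⟪u,v⟫) := by rw [h2]
  have key : (0:ℝ) < ⟪u,u⟫ * (4 - n*N) := by nlinarith [hpos, e1, e2]
  have h4 : ((n*N : ℤ):ℝ) < 4 := by push_cast; nlinarith [key, huu]
  have : (n*N : ℤ) < 4 := by exact_mod_cast h4
  omega

/-- pair-sum bound: `nN + mM ≤ 3` when `v ⊥ w`. -/
lemma pairsum_bound {u v w : V} (hu : u ∈ S) (hv : v ∈ S) (hw : w ∈ S)
    (huv : u ≠ v) (huw : u ≠ w) (hvw : v ≠ w) (hovw : ⟪v,w⟫ = (0:ℝ))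
    {n N m M : ℤ}
    (h1 : (n:ℝ) * ⟪v,v⟫ = 2 * ⟪u,v⟫) (h2 : (N:ℝ) * ⟪u,u⟫ = 2 * ⟪u,v⟫)
    (h3 : (m:ℝ) * ⟪w,w⟫ = 2 * ⟪u,w⟫) (h4 : (M:ℝ) * ⟪u,u⟫ = 2 * ⟪u,w⟫)
    (huu : (0:ℝ) < ⟪u,u⟫) : n * N + m * M ≤ 3 := by
  set z : V := (2:ℝ)•u + (-(n:ℝ))•v + (-(m:ℝ))•w + (0:ℝ)•w + (0:ℝ)•w with hz
  have hzne : z ≠ 0 := by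
    intro h
    rw [hz] at h
    have h2' : (2:ℝ)•u + (-(n:ℝ))•v + ((-(m:ℝ)) + 0 + 0)•w = 0 := by
      rw [add_smul, add_smul]
      rw [← h]; abel
    have := (indep3 hLI hu hv hw huv huw hvw h2').1
    norm_num at this
  have hpos := inner_self_pos' hzne
  rw [hz, expand5] at hpos
  rw [hovw] at hpos
  have e1 : (n:ℝ)*((n:ℝ) * ⟪v,v⟫) = (n:ℝ)*(2 * ⟪u,v⟫) := by rw [h1]
  have e2 : (n:ℝ)*((N:ℝ) * ⟪u,u⟫) = (n:ℝ)*(2 * ⟪u,v⟫) := by rw [h2]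
  have e3 : (m:ℝ)*((m:ℝ) * ⟪w,w⟫) = (m:ℝ)*(2 * ⟪u,w⟫) := by rw [h3]
  have e4 : (m:ℝ)*((M:ℝ) * ⟪u,u⟫) = (m:ℝ)*(2 * ⟪u,w⟫) := by rw [h4]
  have key : (0:ℝ) < ⟪u,u⟫ * (4 - n*N - m*M) := by nlinarith [hpos, e1, e2, e3, e4]
  have h5 : ((n*N + m*M : ℤ):ℝ) < 4 := by push_cast; nlinarith [key, huu]
  have : (n*N + m*M : ℤ) < 4 := by exact_mod_cast h5
  omega

end Bounds

/- ## Case B: both α and β moved by the folding leads to contradiction -/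

lemma link0 {n m : ℤ} {c d ip : ℝ} (hd : d ≠ 0)
    (h1 : (n:ℝ)*c = 2*ip) (h2 : (m:ℝ)*d = 2*ip) (hn : n = 0) : m = 0 := by
  have hmd : (m:ℝ)*d = 0 := by
    rw [hn] at h1; push_cast at h1; linarith
  rcases mul_eq_zero.1 hmd with h | h
  · exact_mod_cast h
  · exact absurd h hd

section CaseB
variable {Φ S : Set V} (hΦ : IsRootSystem Φ) (hS : IsBase Φ S)
include hΦ hS

lemma caseB' {α α' β β' : V}
    (hα : α ∈ S) (hα' : α' ∈ S) (hβ : β ∈ S) (hβ' : β' ∈ S)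
    (hαα' : α ≠ α') (hαβ : α ≠ β) (hαβ' : α ≠ β') (hα'β : α' ≠ β) (hα'β' : α' ≠ β')
    (hββ' : β ≠ β')
    (ho1 : ⟪α,α'⟫ = (0:ℝ)) (ho2 : ⟪β,β'⟫ = (0:ℝ))
    (heq1 : pairR α β - pairR α' β + (pairR α β' - pairR α' β') = 0)
    (heq2 : pairR β α - pairR β' α + (pairR β α' - pairR β' α') = 0)
    (hd : pairR α' β' < pairR α β) : False := by
  have hLI := hS.2.1
  have hlam : (0:ℝ) < ⟪α,α⟫ := inner_self_pos_of_mem hΦ hS hα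
  have hlam' : (0:ℝ) < ⟪α',α'⟫ := inner_self_pos_of_mem hΦ hS hα'
  have hmu : (0:ℝ) < ⟪β,β⟫ := inner_self_pos_of_mem hΦ hS hβ
  have hmu' : (0:ℝ) < ⟪β',β'⟫ := inner_self_pos_of_mem hΦ hS hβ'
  -- the eight Cartan integers
  obtain ⟨p, hp, hp0⟩ := pairR_nonpos_int hΦ hS hβ hα (Ne.symm hαβ)
  obtain ⟨r, hr, hr0⟩ := pairR_nonpos_int hΦ hS hβ hα' (Ne.symm hα'β)
  obtain ⟨q, hq, hq0⟩ := pairR_nonpos_int hΦ hS hβ' hα (Ne.symm hαβ')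
  obtain ⟨t, ht, ht0⟩ := pairR_nonpos_int hΦ hS hβ' hα' (Ne.symm hα'β')
  obtain ⟨P, hP, hP0⟩ := pairR_nonpos_int hΦ hS hα hβ hαβ
  obtain ⟨Q, hQ, hQ0⟩ := pairR_nonpos_int hΦ hS hα hβ' hαβ'
  obtain ⟨R, hR, hR0⟩ := pairR_nonpos_int hΦ hS hα' hβ hα'β
  obtain ⟨T, hT, hT0⟩ := pairR_nonpos_int hΦ hS hα' hβ' hα'β'
  -- multiplicative forms
  have hpm : (p:ℝ) * ⟪β,β⟫ = 2*⟪α,β⟫ := by rw [← hp]; exact pairR_mul_self hmu.ne'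
  have hrm : (r:ℝ) * ⟪β,β⟫ = 2*⟪α',β⟫ := by rw [← hr]; exact pairR_mul_self hmu.ne'
  have hqm : (q:ℝ) * ⟪β',β'⟫ = 2*⟪α,β'⟫ := by rw [← hq]; exact pairR_mul_self hmu'.ne'
  have htm : (t:ℝ) * ⟪β',β'⟫ = 2*⟪α',β'⟫ := by rw [← ht]; exact pairR_mul_self hmu'.ne'
  have hPm : (P:ℝ) * ⟪α,α⟫ = 2*⟪α,β⟫ := by
    rw [← hP, real_inner_comm β α]; exact pairR_mul_self hlam.ne'
  have hQm : (Q:ℝ) * ⟪α,α⟫ = 2*⟪α,β'⟫ := by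
    rw [← hQ, real_inner_comm β' α]; exact pairR_mul_self hlam.ne'
  have hRm : (R:ℝ) * ⟪α',α'⟫ = 2*⟪α',β⟫ := by
    rw [← hR, real_inner_comm β α']; exact pairR_mul_self hlam'.ne'
  have hTm : (T:ℝ) * ⟪α',α'⟫ = 2*⟪α',β'⟫ := by
    rw [← hT, real_inner_comm β' α']; exact pairR_mul_self hlam'.ne'
  -- integer forms of the folding equations
  rw [hp, hr, hq, ht] at heq1
  rw [hP, hQ, hR, hT] at heq2
  have he1 : p - r + (q - t) = 0 := by exact_mod_cast heq1
  have he2 : P - Q + (R - T) = 0 := by exact_mod_cast heq2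
  rw [hp, ht] at hd
  have hd' : t < p := by exact_mod_cast hd
  -- basic sign facts
  have htn : t ≤ -1 := by omega
  have hqn : q ≤ -1 := by omega
  have hTn : T ≤ -1 := by
    have : T ≠ 0 := by
      intro h
      have := link0 hmu'.ne' hTm htm h
      omega
    omega
  have hQn : Q ≤ -1 := by
    have : Q ≠ 0 := by
      intro h
      have := link0 hmu'.ne' hQm hqm h
      omega
    omega
  -- the pair-sum bound  q*Q + t*T ≤ 3  (at the vertex β')
  have hqm' : (q:ℝ) * ⟪β',β'⟫ = 2*⟪β',α⟫ := by rw [real_inner_comm α β']; exact hqm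
  have hQm' : (Q:ℝ) * ⟪α,α⟫ = 2*⟪β',α⟫ := by rw [real_inner_comm α β']; exact hQm
  have htm' : (t:ℝ) * ⟪β',β'⟫ = 2*⟪β',α'⟫ := by rw [real_inner_comm α' β']; exact htm
  have hTm' : (T:ℝ) * ⟪α',α'⟫ = 2*⟪β',α'⟫ := by rw [real_inner_comm α' β']; exact hTm
  have hsum : Q*q + T*t ≤ 3 :=
    pairsum_bound hLI hβ' hα hα' (Ne.symm hαβ') (Ne.symm hα'β') hαα' ho1
      hQm' hqm' hTm' htm' hmu'
  have hqQ1 : 1 ≤ Q*q := by nlinarith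
  have htT1 : 1 ≤ T*t := by nlinarith
  have hqQ2 : Q*q ≤ 2 := by linarith
  have htT2 : T*t ≤ 2 := by linarith
  have hq2 : -2 ≤ q := by nlinarith
  have hQ2 : -2 ≤ Q := by nlinarith
  have ht2 : -2 ≤ t := by nlinarith
  have hT2 : -2 ≤ T := by nlinarith
  -- individual product bounds
  have hpP : p*P ≤ 3 := prod_bound hLI hα hβ hαβ hpm hPm hlam
  have hrR : r*R ≤ 3 := prod_bound hLI hα' hβ hα'β hrm hRm hlam'
  -- case analysis
  rcases (show q = -1 ∨ q = -2 by omega) with hq1 | hq1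
  · rcases (show Q = -1 ∨ Q = -2 by omega) with hQ1 | hQ1
    · -- q = Q = -1
      rcases (show t = -1 ∨ t = -2 by omega) with ht1 | ht1
      · -- t = -1 : p = 0 hence P = 0, r = 0 hence R = 0, contradiction with he2
        have hpz : p = 0 := by omega
        have hrz : r = 0 := by omega
        have hPz : P = 0 := link0 hlam.ne' hpm hPm hpz
        have hRz : R = 0 := link0 hlam'.ne' hrm hRm hrz
        omega
      · -- t = -2
        rcases (show T = -1 ∨ T = -2 by omega) with hT1 | hT1
        · -- the B₃-like survivor inside case B : kill by Gram certificate
          rcases (show p = 0 ∨ p = -1 by omega) with hp1 | hp1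
          · -- p = 0 → P = 0, r = 1 > 0 impossible
            have hPz : P = 0 := link0 hlam.ne' hpm hPm hp1
            omega
          · -- p = -1, r = 0, R = 0, P = -2
            have hrz : r = 0 := by omega
            have hRz : R = 0 := link0 hlam'.ne' hrm hRm hrz
            have hP2 : P = -2 := by omega
            -- real data
            rw [hq1] at hqm; rw [hQ1] at hQm; rw [ht1] at htm; rw [hT1] at hTm
            rw [hp1] at hpm; rw [hP2] at hPm; rw [hrz] at hrm
            push_cast at hqm hQm htm hTm hpm hPm hrm
            -- certificate z = 2α + α' + β + 2β'
            set z : V := (2:ℝ)•α + (1:ℝ)•α' + (1:ℝ)•β + (2:ℝ)•β' + (0:ℝ)•β' with hz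
            have hzne : z ≠ 0 := by
              intro h
              rw [hz] at h
              simp only [zero_smul, add_zero] at h
              have := (indep4 hLI hα hα' hβ hβ' hαα' hαβ hαβ' hα'β hα'β' hββ' h).1
              norm_num at this
            have hpos := inner_self_pos' hzne
            rw [hz, expand5] at hpos
            rw [ho1, ho2] at hpos
            linarith [hpos, hqm, hQm, htm, hTm, hpm, hPm, hrm]
        · -- T = -2 : t*T = 4 > 2
          rw [ht1, hT1] at htT2; norm_num at htT2
    · -- Q = -2, q = -1 : t = T = -1, p = 0, P = 0, r = 0, R = 0, contradiction he2
      have ht1 : t = -1 := by nlinarith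
      have hT1 : T = -1 := by nlinarith
      have hpz : p = 0 := by omega
      have hrz : r = 0 := by omega
      have hPz : P = 0 := link0 hlam.ne' hpm hPm hpz
      have hRz : R = 0 := link0 hlam'.ne' hrm hRm hrz
      omega
  · -- q = -2
    rcases (show Q = -1 ∨ Q = -2 by omega) with hQ1 | hQ1
    · -- q = -2, Q = -1 : t = T = -1; survivor; kill by Gram certificate
      have ht1 : t = -1 := by nlinarith
      have hT1 : T = -1 := by nlinarith
      have hpz : p = 0 := by omega
      have hrz : r = -1 := by omega
      have hPz : P = 0 := link0 hlam.ne' hpm hPm hpz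
      have hR2 : R = -2 := by omega
      rw [hq1] at hqm; rw [hQ1] at hQm; rw [ht1] at htm; rw [hT1] at hTm
      rw [hpz] at hpm; rw [hPz] at hPm; rw [hrz] at hrm; rw [hR2] at hRm
      push_cast at hqm hQm htm hTm hpm hPm hrm hRm
      set z : V := (1:ℝ)•α + (2:ℝ)•α' + (1:ℝ)•β + (2:ℝ)•β' + (0:ℝ)•β' with hz
      have hzne : z ≠ 0 := by
        intro h
        rw [hz] at h
        simp only [zero_smul, add_zero] at h
        have := (indep4 hLI hα hα' hβ hβ' hαα' hαβ hαβ' hα'β hα'β' hββ' h).1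
        norm_num at this
      have hpos := inner_self_pos' hzne
      rw [hz, expand5] at hpos
      rw [ho1, ho2] at hpos
      linarith [hpos, hqm, hQm, htm, hTm, hpm, hPm, hrm, hRm]
    · -- q = -2, Q = -2 : q*Q = 4 > 2
      rw [hq1, hQ1] at hqQ2; norm_num at hqQ2

end CaseB

/- ## extra vertex analysis -/

section Vertex
variable {Φ S : Set V} (hΦ : IsRootSystem Φ) (hS : IsBase Φ S)
include hΦ hS

/-- In the B₃ configuration `α,β,β'` (with `⟪β,β⟫=⟪α,α⟫`, `2⟪β',β'⟫=⟪α,α⟫`,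
`2⟪α,β⟫ = 2⟪α,β'⟫ = -⟪α,α⟫`, `β ⊥ β'`), an extra vertex `δ` (with partner `δ'`)
cannot satisfy `⟪δ,β⟫ < ⟪δ,β'⟫`. -/
lemma vertexAux {α β β' δ δ' : V}
    (hα : α ∈ S) (hβ : β ∈ S) (hβ' : β' ∈ S) (hδ : δ ∈ S) (hδ' : δ' ∈ S)
    (hαβ : α ≠ β) (hαβ' : α ≠ β') (hββ' : β ≠ β')
    (hδα : δ ≠ α) (hδβ : δ ≠ β) (hδβ' : δ ≠ β')
    (hδ'α : δ' ≠ α) (hδ'β : δ' ≠ β) (hδ'β' : δ' ≠ β')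
    (hoββ' : ⟪β,β'⟫ = (0:ℝ))
    (hδδ' : δ = δ' ∨ ⟪δ,δ'⟫ = (0:ℝ))
    (hlen1 : ⟪β,β⟫ = ⟪α,α⟫) (hlen2 : 2*⟪β',β'⟫ = ⟪α,α⟫)
    (hvab : 2*⟪α,β⟫ = -⟪α,α⟫) (hvab' : 2*⟪α,β'⟫ = -⟪α,α⟫)
    (hw : ⟪δ,α⟫ = ⟪δ',α⟫)
    (heq1 : pairR δ β - pairR δ' β + (pairR δ β' - pairR δ' β') = 0)
    (heq2 : pairR β δ - pairR β' δ + (pairR β δ' - pairR β' δ') = 0)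
    (hlt : ⟪δ,β⟫ < ⟪δ,β'⟫) : False := by
  have hLI := hS.2.1
  have hlam : (0:ℝ) < ⟪α,α⟫ := inner_self_pos_of_mem hΦ hS hα
  have hν : (0:ℝ) < ⟪δ,δ⟫ := inner_self_pos_of_mem hΦ hS hδ
  have hν' : (0:ℝ) < ⟪δ',δ'⟫ := inner_self_pos_of_mem hΦ hS hδ'
  have hmu : (0:ℝ) < ⟪β,β⟫ := inner_self_pos_of_mem hΦ hS hβ
  have hmu' : (0:ℝ) < ⟪β',β'⟫ := inner_self_pos_of_mem hΦ hS hβ'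
  -- dispose of the case δ = δ'
  rcases hδδ' with hdd | hodd
  · subst hdd
    have h1 : pairR β δ * ⟪δ,δ⟫ = 2*⟪β,δ⟫ := pairR_mul_self hν.ne'
    have h2 : pairR β' δ * ⟪δ,δ⟫ = 2*⟪β',δ⟫ := pairR_mul_self hν.ne'
    have h3 : pairR β δ = pairR β' δ := by linarith
    rw [real_inner_comm δ β] at h1
    rw [real_inner_comm δ β'] at h2
    rw [h3] at h1
    linarith
  have hδδ'ne : δ ≠ δ' := by
    intro h
    rw [← h] at hodd
    exact hν.ne' hodd
  -- Cartan integers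
  obtain ⟨a1, ha1, ha10⟩ := pairR_nonpos_int hΦ hS hβ hδ hδβ.symm    -- wrong order? see below
  obtain ⟨a2, ha2, ha20⟩ := pairR_nonpos_int hΦ hS hβ' hδ hδβ'.symm
  obtain ⟨b1, hb1, hb10⟩ := pairR_nonpos_int hΦ hS hβ hδ' hδ'β.symm
  obtain ⟨b2, hb2, hb20⟩ := pairR_nonpos_int hΦ hS hβ' hδ' hδ'β'.symm
  obtain ⟨k1, hk1, hk10⟩ := pairR_nonpos_int hΦ hS hδ hβ hδβ
  obtain ⟨k2, hk2, hk20⟩ := pairR_nonpos_int hΦ hS hδ hβ' hδβ'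
  obtain ⟨k1', hk1', hk1'0⟩ := pairR_nonpos_int hΦ hS hδ' hβ hδ'β
  obtain ⟨k2', hk2', hk2'0⟩ := pairR_nonpos_int hΦ hS hδ' hβ' hδ'β'
  obtain ⟨i1, hi1, hi10⟩ := pairR_nonpos_int hΦ hS hα hδ hδα.symm
  obtain ⟨l1, hl1, hl10⟩ := pairR_nonpos_int hΦ hS hδ hα hδα
  obtain ⟨l1', hl1', hl1'0⟩ := pairR_nonpos_int hΦ hS hδ' hα hδ'α
  -- multiplicative forms, all normalized to ⟪δ,·⟫ / ⟪δ',·⟫ / ⟪α,·⟫ orientations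
  have ha1m : (a1:ℝ) * ⟪β,β⟫ = 2*⟪δ,β⟫ := by rw [← ha1]; exact pairR_mul_self hmu.ne'
  have ha2m : (a2:ℝ) * ⟪β',β'⟫ = 2*⟪δ,β'⟫ := by rw [← ha2]; exact pairR_mul_self hmu'.ne'
  have hb1m : (b1:ℝ) * ⟪β,β⟫ = 2*⟪δ',β⟫ := by rw [← hb1]; exact pairR_mul_self hmu.ne'
  have hb2m : (b2:ℝ) * ⟪β',β'⟫ = 2*⟪δ',β'⟫ := by rw [← hb2]; exact pairR_mul_self hmu'.ne'
  have hk1m : (k1:ℝ) * ⟪δ,δ⟫ = 2*⟪δ,β⟫ := by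
    rw [← hk1, real_inner_comm β δ]; exact pairR_mul_self hν.ne'
  have hk2m : (k2:ℝ) * ⟪δ,δ⟫ = 2*⟪δ,β'⟫ := by
    rw [← hk2, real_inner_comm β' δ]; exact pairR_mul_self hν.ne'
  have hk1'm : (k1':ℝ) * ⟪δ',δ'⟫ = 2*⟪δ',β⟫ := by
    rw [← hk1', real_inner_comm β δ']; exact pairR_mul_self hν'.ne'
  have hk2'm : (k2':ℝ) * ⟪δ',δ'⟫ = 2*⟪δ',β'⟫ := by
    rw [← hk2', real_inner_comm β' δ']; exact pairR_mul_self hν'.ne'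
  have hi1m : (i1:ℝ) * ⟪α,α⟫ = 2*⟪δ,α⟫ := by rw [← hi1]; exact pairR_mul_self hlam.ne'
  have hl1m : (l1:ℝ) * ⟪δ,δ⟫ = 2*⟪δ,α⟫ := by
    rw [← hl1, real_inner_comm α δ]; exact pairR_mul_self hν.ne'
  have hl1'm : (l1':ℝ) * ⟪δ',δ'⟫ = 2*⟪δ,α⟫ := by
    rw [← hl1', hw, real_inner_comm α δ']; exact pairR_mul_self hν'.ne'
  -- rescaled forms using the length data
  have ha1l : (a1:ℝ) * ⟪α,α⟫ = 2*⟪δ,β⟫ := by rw [← hlen1]; exact ha1m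
  have ha2l : (a2:ℝ) * ⟪α,α⟫ = 4*⟪δ,β'⟫ := by
    have : (a2:ℝ) * (2*⟪β',β'⟫) = 4*⟪δ,β'⟫ := by linear_combination 2*ha2m
    rw [hlen2] at this; exact this
  have hb1l : (b1:ℝ) * ⟪α,α⟫ = 2*⟪δ',β⟫ := by rw [← hlen1]; exact hb1m
  have hb2l : (b2:ℝ) * ⟪α,α⟫ = 4*⟪δ',β'⟫ := by
    have : (b2:ℝ) * (2*⟪β',β'⟫) = 4*⟪δ',β'⟫ := by linear_combination 2*hb2m
    rw [hlen2] at this; exact this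
  -- integer forms of the folding equations
  rw [ha1, ha2, hb1, hb2] at heq1
  rw [hk1, hk2, hk1', hk2'] at heq2
  have he1 : a1 - b1 + (a2 - b2) = 0 := by exact_mod_cast heq1
  have he2 : k1 - k2 + (k1' - k2') = 0 := by exact_mod_cast heq2
  -- hlt in integer form : 2*a1 < a2 and k1 < k2
  have h2a : 2*a1 < a2 := by
    have hr : ((2*a1:ℤ):ℝ) * ⟪α,α⟫ < ((a2:ℤ):ℝ) * ⟪α,α⟫ := by push_cast; linarith
    exact_mod_cast (mul_lt_mul_iff_of_pos_right hlam).1 hr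
  have hk12 : k1 < k2 := by
    have hr : ((k1:ℤ):ℝ) * ⟪δ,δ⟫ < ((k2:ℤ):ℝ) * ⟪δ,δ⟫ := by push_cast; linarith
    exact_mod_cast (mul_lt_mul_iff_of_pos_right hν).1 hr
  -- signs
  have ha1n : a1 ≤ -1 := by omega
  have hk1n : k1 ≤ -1 := by
    have : k1 ≠ 0 := by
      intro h
      have := link0 hmu.ne' hk1m ha1m h   -- k1 = 0 → a1 = 0
      omega
    omega
  have hk2'n : k2' ≤ -1 := by omega
  have hb2n : b2 ≤ -1 := by
    have : b2 ≠ 0 := by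
      intro h
      have := link0 hν'.ne' hb2m hk2'm h
      omega
    omega
  -- product bounds
  have pa1k1 : a1*k1 ≤ 3 := prod_bound hLI hδ hβ hδβ ha1m hk1m hν
  have pa2k2 : a2*k2 ≤ 3 := prod_bound hLI hδ hβ' hδβ' ha2m hk2m hν
  have pb1k1' : b1*k1' ≤ 3 := prod_bound hLI hδ' hβ hδ'β hb1m hk1'm hν'
  have pb2k2' : b2*k2' ≤ 3 := prod_bound hLI hδ' hβ' hδ'β' hb2m hk2'm hν'
  have hi1m' : (i1:ℝ) * ⟪α,α⟫ = 2*⟪δ',α⟫ := by rw [← hw]; exact hi1m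
  have hl1'm' : (l1':ℝ) * ⟪δ',δ'⟫ = 2*⟪δ',α⟫ := by rw [← hw]; exact hl1'm
  have pi1l1 : i1*l1 ≤ 3 := prod_bound hLI hδ hα hδα hi1m hl1m hν
  have pi1l1' : i1*l1' ≤ 3 := prod_bound hLI hδ' hα hδ'α hi1m' hl1'm' hν'
  -- nonpositivity of raw inner products
  have hwn : ⟪δ,α⟫ ≤ 0 := inner_nonpos_base hΦ hS hα hδ hδα.symm
  -- more bounds
  have hb2ge : -3 ≤ b2 := by nlinarith
  have hk2'ge : -3 ≤ k2' := by nlinarith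
  have hk1'k2' : k2' < k1' := by omega
  have h2b : b2 < 2*b1 := by
    have h1 : ((k2':ℤ):ℝ) * ⟪δ',δ'⟫ < ((k1':ℤ):ℝ) * ⟪δ',δ'⟫ := by
      exact_mod_cast (mul_lt_mul_iff_of_pos_right hν').2 (by exact_mod_cast hk1'k2')
    have hyx' : ((b2:ℤ):ℝ) * ⟪α,α⟫ < ((2*b1:ℤ):ℝ) * ⟪α,α⟫ := by
      push_cast
      push_cast at h1
      linarith [hk1'm, hk2'm, hb1l, hb2l]
    exact_mod_cast (mul_lt_mul_iff_of_pos_right hlam).1 hyx'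
  have hb1ge : -1 ≤ b1 := by omega
  have ha1ge : -3 ≤ a1 := by nlinarith
  -- main case split on b1
  rcases (show (b1 = -1 ∧ b2 = -3) ∨ b1 = 0 by omega) with ⟨hb1v, hb2v⟩ | hb1v
  · -- s = 4 : 3 k1' = -2, impossible
    have hk2'v : k2' = -1 := by nlinarith
    rw [hb1v] at hb1l; rw [hb2v] at hb2l; rw [hk2'v] at hk2'm
    push_cast at hb1l hb2l hk2'm
    have hνeq : ⟪δ',δ'⟫ = 3/2*⟪α,α⟫ := by linarith
    rw [hνeq] at hk1'm
    have h6 : ((3*k1' : ℤ):ℝ) * ⟪α,α⟫ = ((-2:ℤ):ℝ) * ⟪α,α⟫ := by push_cast; linarith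
    have h7 : (3*k1' : ℤ) = -2 := by exact_mod_cast mul_right_cancel₀ hlam.ne' h6
    omega
  · -- b1 = 0
    rw [hb1v] at hb1l; push_cast at hb1l
    have hx'0 : ⟪δ',β⟫ = 0 := by linarith
    have hk1'0 : k1' = 0 := link0 hν'.ne' hb1m hk1'm hb1v
    have hb2v : b2 = a1 + a2 := by omega
    rcases (show (a1 = -1 ∧ a2 = 0) ∨ (a1 = -2 ∧ a2 = 0) ∨ (a1 = -1 ∧ a2 = -1) ∨
        (a1 = -3 ∧ a2 = 0) ∨ (a1 = -2 ∧ a2 = -1) by omega) with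
      ⟨hA1, hA2⟩ | ⟨hA1, hA2⟩ | ⟨hA1, hA2⟩ | ⟨hA1, hA2⟩ | ⟨hA1, hA2⟩
    · -- (a1,a2) = (-1,0) : x = -lam/2, y = 0
      have hk20 : k2 = 0 := link0 hν.ne' ha2m hk2m hA2
      have hk2'k1 : k2' = k1 := by omega
      rw [hA1] at ha1l; rw [hA2] at ha2l; push_cast at ha1l ha2l
      have hy0 : ⟪δ,β'⟫ = 0 := by linarith
      -- b2 = -1, y' = -lam/4
      have hb2v1 : b2 = -1 := by omega
      rw [hb2v1] at hb2l; push_cast at hb2l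
      rcases (show k1 = -1 ∨ k1 ≤ -2 by omega) with hk1v | hk1v
      · -- k1 = -1 : ν = lam, ν' = lam/2
        rw [hk1v] at hk1m
        rw [hk1v] at hk2'k1
        rw [hk2'k1] at hk2'm
        push_cast at hk1m hk2'm
        have hνv : ⟪δ,δ⟫ = ⟪α,α⟫ := by linarith
        have hν'v : ⟪δ',δ'⟫ = 1/2*⟪α,α⟫ := by linarith
        rw [hνv] at hl1m
        rw [hν'v] at hl1'm
        have hl1i : l1 = i1 := by
          have : ((l1:ℤ):ℝ) * ⟪α,α⟫ = ((i1:ℤ):ℝ) * ⟪α,α⟫ := by push_cast; linarith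
          exact_mod_cast mul_right_cancel₀ hlam.ne' this
        have hl1'i : l1' = 2*i1 := by
          have : ((l1':ℤ):ℝ) * ⟪α,α⟫ = ((2*i1:ℤ):ℝ) * ⟪α,α⟫ := by push_cast; linarith
          exact_mod_cast mul_right_cancel₀ hlam.ne' this
        have hi1b : -1 ≤ i1 := by nlinarith
        rcases (show i1 = 0 ∨ i1 = -1 by omega) with hi1v | hi1v
        · -- w = 0 : 5-vector certificate  δ + 2δ' + 3α + 2β + 4β'
          rw [hi1v] at hi1m; push_cast at hi1m
          have hw0 : ⟪δ,α⟫ = 0 := by linarith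
          have hw0' : ⟪δ',α⟫ = 0 := by rw [← hw]; exact hw0
          set z : V := (1:ℝ)•δ + (2:ℝ)•δ' + (3:ℝ)•α + (2:ℝ)•β + (4:ℝ)•β' with hz
          have hzne : z ≠ 0 := by
            intro h
            rw [hz] at h
            have := (indep5 hLI hδ hδ' hα hβ hβ' hδδ'ne hδα hδβ hδβ' hδ'α hδ'β hδ'β'
              hαβ hαβ' hββ' h).1
            norm_num at this
          have hpos := inner_self_pos' hzne
          rw [hz, expand5] at hpos
          rw [hodd, hoββ', hw0, hw0', hx'0, hy0, hνv, hν'v, hlen1] at hpos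
          linarith [hpos, ha1l, hb2l, hvab, hvab', hlen2]
        · -- w = -lam/2 : certificate δ + 3α + 2β + 3β'
          rw [hi1v] at hi1m; push_cast at hi1m
          set z : V := (1:ℝ)•δ + (3:ℝ)•α + (2:ℝ)•β + (3:ℝ)•β' + (0:ℝ)•β' with hz
          have hzne : z ≠ 0 := by
            intro h
            rw [hz] at h
            simp only [zero_smul, add_zero] at h
            have := (indep4 hLI hδ hα hβ hβ' hδα hδβ hδβ' hαβ hαβ' hββ' h).1
            norm_num at this
          have hpos := inner_self_pos' hzne
          rw [hz, expand5] at hpos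
          rw [hoββ', hy0, hνv, hlen1] at hpos
          linarith [hpos, ha1l, hvab, hvab', hlen2, hi1m]
      · -- k1 ≤ -2 : ν ≤ lam/2, certificate δ + α + β + β'
        have hk1ν : (k1:ℝ) * ⟪δ,δ⟫ ≤ (-2:ℝ) * ⟪δ,δ⟫ := by
          apply mul_le_mul_of_nonneg_right _ hν.le
          exact_mod_cast (show (k1:ℤ) ≤ -2 from hk1v)
        have hνle : 2*⟪δ,δ⟫ ≤ ⟪α,α⟫ := by linarith [hk1m, ha1l]
        set z : V := (1:ℝ)•δ + (1:ℝ)•α + (1:ℝ)•β + (1:ℝ)•β' + (0:ℝ)•β' with hz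
        have hzne : z ≠ 0 := by
          intro h
          rw [hz] at h
          simp only [zero_smul, add_zero] at h
          have := (indep4 hLI hδ hα hβ hβ' hδα hδβ hδβ' hαβ hαβ' hββ' h).1
          norm_num at this
        have hpos := inner_self_pos' hzne
        rw [hz, expand5] at hpos
        rw [hoββ', hy0, hlen1] at hpos
        linarith [hpos, ha1l, hvab, hvab', hlen2, hwn, hνle]
    · -- (a1,a2) = (-2,0) : x = -lam, y = 0 ; k1 = -1, ν = 2 lam; δ' certificate
      have hk20 : k2 = 0 := link0 hν.ne' ha2m hk2m hA2
      rw [hA1] at ha1l; rw [hA2] at ha2l; push_cast at ha1l ha2l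
      have hy0 : ⟪δ,β'⟫ = 0 := by linarith
      rw [hA1] at pa1k1
      have hk1v : k1 = -1 := by omega
      have hk2'v : k2' = -1 := by omega
      have hb2v2 : b2 = -2 := by omega
      rw [hk1v] at hk1m; rw [hk2'v] at hk2'm; rw [hb2v2] at hb2l
      push_cast at hk1m hk2'm hb2l
      have hνv : ⟪δ,δ⟫ = 2*⟪α,α⟫ := by linarith
      have hν'v : ⟪δ',δ'⟫ = ⟪α,α⟫ := by linarith
      -- w = 0 : i1 = 2*l1 even and i1 = l1', i1*l1' ≤ 3 forces i1 = 0
      rw [hνv] at hl1m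
      rw [hν'v] at hl1'm
      have hi1l : i1 = 2*l1 := by
        have : ((i1:ℤ):ℝ) * ⟪α,α⟫ = ((2*l1:ℤ):ℝ) * ⟪α,α⟫ := by push_cast; linarith
        exact_mod_cast mul_right_cancel₀ hlam.ne' this
      have hl1'i : l1' = i1 := by
        have : ((l1':ℤ):ℝ) * ⟪α,α⟫ = ((i1:ℤ):ℝ) * ⟪α,α⟫ := by push_cast; linarith
        exact_mod_cast mul_right_cancel₀ hlam.ne' this
      have hi1b : -1 ≤ i1 := by nlinarith
      have hi1v : i1 = 0 := by omega
      rw [hi1v] at hi1m; push_cast at hi1m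
      have hw0 : ⟪δ,α⟫ = 0 := by linarith
      have hw0' : ⟪δ',α⟫ = 0 := by rw [← hw]; exact hw0
      set z : V := (1:ℝ)•δ' + (2:ℝ)•α + (1:ℝ)•β + (3:ℝ)•β' + (0:ℝ)•β' with hz
      have hzne : z ≠ 0 := by
        intro h
        rw [hz] at h
        simp only [zero_smul, add_zero] at h
        have := (indep4 hLI hδ' hα hβ hβ' hδ'α hδ'β hδ'β' hαβ hαβ' hββ' h).1
        norm_num at this
      have hpos := inner_self_pos' hzne
      rw [hz, expand5] at hpos
      rw [hoββ', hx'0, hν'v, hlen1, hw0'] at hpos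
      linarith [hpos, hb2l, hvab, hvab', hlen2]
    · -- (a1,a2) = (-1,-1) : x = -lam/2, y = -lam/4
      rw [hA1] at ha1l; rw [hA2] at ha2l; push_cast at ha1l ha2l
      have hk2n : k2 ≤ -1 := by
        have : k2 ≠ 0 := by
          intro h
          have := link0 hmu'.ne' hk2m ha2m h
          omega
        omega
      have hk1k2 : k1 = 2*k2 := by
        have : ((k1:ℤ):ℝ) * ⟪δ,δ⟫ = ((2*k2:ℤ):ℝ) * ⟪δ,δ⟫ := by push_cast; linarith [hk1m, hk2m]
        exact_mod_cast mul_right_cancel₀ hν.ne' this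
      rw [hA1] at pa1k1
      have hk1v : k1 = -2 := by omega
      have hk2v : k2 = -1 := by omega
      have hk2'v : k2' = -1 := by omega
      have hb2v2 : b2 = -2 := by omega
      rw [hk1v] at hk1m; rw [hk2'v] at hk2'm; rw [hb2v2] at hb2l
      push_cast at hk1m hk2'm hb2l
      have hνv : ⟪δ,δ⟫ = 1/2*⟪α,α⟫ := by linarith
      rw [hνv] at hl1m
      have hl1i : l1 = 2*i1 := by
        have : ((l1:ℤ):ℝ) * ⟪α,α⟫ = ((2*i1:ℤ):ℝ) * ⟪α,α⟫ := by push_cast; linarith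
        exact_mod_cast mul_right_cancel₀ hlam.ne' this
      have hi1b : -1 ≤ i1 := by nlinarith
      rcases (show i1 = 0 ∨ i1 = -1 by omega) with hi1v | hi1v
      · -- w = 0 : certificate 2δ + 4α + 3β + 5β'
        rw [hi1v] at hi1m; push_cast at hi1m
        have hw0 : ⟪δ,α⟫ = 0 := by linarith
        set z : V := (2:ℝ)•δ + (4:ℝ)•α + (3:ℝ)•β + (5:ℝ)•β' + (0:ℝ)•β' with hz
        have hzne : z ≠ 0 := by
          intro h
          rw [hz] at h
          simp only [zero_smul, add_zero] at h
          have := (indep4 hLI hδ hα hβ hβ' hδα hδβ hδβ' hαβ hαβ' hββ' h).1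
          norm_num at this
        have hpos := inner_self_pos' hzne
        rw [hz, expand5] at hpos
        rw [hoββ', hνv, hlen1, hw0] at hpos
        linarith [hpos, ha1l, ha2l, hvab, hvab', hlen2]
      · -- w = -lam/2 : certificate 2δ + 8α + 5β + 9β'
        rw [hi1v] at hi1m; push_cast at hi1m
        set z : V := (2:ℝ)•δ + (8:ℝ)•α + (5:ℝ)•β + (9:ℝ)•β' + (0:ℝ)•β' with hz
        have hzne : z ≠ 0 := by
          intro h
          rw [hz] at h
          simp only [zero_smul, add_zero] at h
          have := (indep4 hLI hδ hα hβ hβ' hδα hδβ hδβ' hαβ hαβ' hββ' h).1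
          norm_num at this
        have hpos := inner_self_pos' hzne
        rw [hz, expand5] at hpos
        rw [hoββ', hνv, hlen1] at hpos
        linarith [hpos, ha1l, ha2l, hvab, hvab', hlen2, hi1m]
    · -- (a1,a2) = (-3,0) : certificate δ + 3α + 3β + 3β'
      have hk20 : k2 = 0 := link0 hν.ne' ha2m hk2m hA2
      rw [hA1] at ha1l; rw [hA2] at ha2l; push_cast at ha1l ha2l
      have hy0 : ⟪δ,β'⟫ = 0 := by linarith
      rw [hA1] at pa1k1
      have hk1v : k1 = -1 := by omega
      rw [hk1v] at hk1m; push_cast at hk1m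
      have hνv : ⟪δ,δ⟫ = 3*⟪α,α⟫ := by linarith
      set z : V := (1:ℝ)•δ + (3:ℝ)•α + (3:ℝ)•β + (3:ℝ)•β' + (0:ℝ)•β' with hz
      have hzne : z ≠ 0 := by
        intro h
        rw [hz] at h
        simp only [zero_smul, add_zero] at h
        have := (indep4 hLI hδ hα hβ hβ' hδα hδβ hδβ' hαβ hαβ' hββ' h).1
        norm_num at this
      have hpos := inner_self_pos' hzne
      rw [hz, expand5] at hpos
      rw [hoββ', hy0, hνv, hlen1] at hpos
      linarith [hpos, ha1l, hvab, hvab', hlen2, hwn]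
    · -- (a1,a2) = (-2,-1) : k1 = 4 k2 ≤ -4 contradicts a1 k1 ≤ 3
      rw [hA1] at ha1l; rw [hA2] at ha2l; push_cast at ha1l ha2l
      have hk2n : k2 ≤ -1 := by
        have : k2 ≠ 0 := by
          intro h
          have := link0 hmu'.ne' hk2m ha2m h
          omega
        omega
      have hk1k2 : k1 = 4*k2 := by
        have : ((k1:ℤ):ℝ) * ⟪δ,δ⟫ = ((4*k2:ℤ):ℝ) * ⟪δ,δ⟫ := by push_cast; linarith [hk1m, hk2m]
        exact_mod_cast mul_right_cancel₀ hν.ne' this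
      rw [hA1] at pa1k1
      omega

end Vertex

section Vertex2
variable {Φ S : Set V} (hΦ : IsRootSystem Φ) (hS : IsBase Φ S)
include hΦ hS

lemma vertexKill {α β β' δ δ' : V}
    (hα : α ∈ S) (hβ : β ∈ S) (hβ' : β' ∈ S) (hδ : δ ∈ S) (hδ' : δ' ∈ S)
    (hαβ : α ≠ β) (hαβ' : α ≠ β') (hββ' : β ≠ β')
    (hδα : δ ≠ α) (hδβ : δ ≠ β) (hδβ' : δ ≠ β')
    (hδ'α : δ' ≠ α) (hδ'β : δ' ≠ β) (hδ'β' : δ' ≠ β')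
    (hoββ' : ⟪β,β'⟫ = (0:ℝ))
    (hδδ' : δ = δ' ∨ ⟪δ,δ'⟫ = (0:ℝ))
    (hlen1 : ⟪β,β⟫ = ⟪α,α⟫) (hlen2 : 2*⟪β',β'⟫ = ⟪α,α⟫)
    (hvab : 2*⟪α,β⟫ = -⟪α,α⟫) (hvab' : 2*⟪α,β'⟫ = -⟪α,α⟫)
    (hw : ⟪δ,α⟫ = ⟪δ',α⟫)
    (heq1 : pairR δ β - pairR δ' β + (pairR δ β' - pairR δ' β') = 0)
    (heq2 : pairR β δ - pairR β' δ + (pairR β δ' - pairR β' δ') = 0) :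
    ⟪δ,α⟫ = 0 ∧ ⟪δ,β⟫ = 0 ∧ ⟪δ,β'⟫ = 0 := by
  have hLI := hS.2.1
  have hlam : (0:ℝ) < ⟪α,α⟫ := inner_self_pos_of_mem hΦ hS hα
  have hν : (0:ℝ) < ⟪δ,δ⟫ := inner_self_pos_of_mem hΦ hS hδ
  have hν' : (0:ℝ) < ⟪δ',δ'⟫ := inner_self_pos_of_mem hΦ hS hδ'
  have hmu : (0:ℝ) < ⟪β,β⟫ := inner_self_pos_of_mem hΦ hS hβ
  have hmu' : (0:ℝ) < ⟪β',β'⟫ := inner_self_pos_of_mem hΦ hS hβ'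
  rcases lt_trichotomy (⟪δ,β⟫ : ℝ) ⟪δ,β'⟫ with hlt | heqxy | hgt
  · exact absurd hlt (by
      intro h
      exact vertexAux hΦ hS hα hβ hβ' hδ hδ' hαβ hαβ' hββ' hδα hδβ hδβ' hδ'α hδ'β hδ'β'
        hoββ' hδδ' hlen1 hlen2 hvab hvab' hw heq1 heq2 h)
  · -- the case ⟪δ,β⟫ = ⟪δ,β'⟫
    -- first: pairR β δ = pairR β' δ, hence pairR β δ' = pairR β' δ', hence ⟪δ',β⟫ = ⟪δ',β'⟫
    have hm1 : pairR β δ * ⟪δ,δ⟫ = 2*⟪δ,β⟫ := by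
      rw [real_inner_comm β δ]; exact pairR_mul_self hν.ne'
    have hm2 : pairR β' δ * ⟪δ,δ⟫ = 2*⟪δ,β'⟫ := by
      rw [real_inner_comm β' δ]; exact pairR_mul_self hν.ne'
    have hpq : pairR β δ = pairR β' δ := by
      have h0 : (pairR β δ - pairR β' δ) * ⟪δ,δ⟫ = 0 := by
        have : (pairR β δ - pairR β' δ) * ⟪δ,δ⟫ = 2*⟪δ,β⟫ - 2*⟪δ,β'⟫ := by ring_nf; nlinarith [hm1, hm2]
        rw [this, heqxy]; ring
      rcases mul_eq_zero.1 h0 with h | h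
      · linarith
      · exact absurd h hν.ne'
    have hpq' : pairR β δ' = pairR β' δ' := by linarith
    have hm1' : pairR β δ' * ⟪δ',δ'⟫ = 2*⟪δ',β⟫ := by
      rw [real_inner_comm β δ']; exact pairR_mul_self hν'.ne'
    have hm2' : pairR β' δ' * ⟪δ',δ'⟫ = 2*⟪δ',β'⟫ := by
      rw [real_inner_comm β' δ']; exact pairR_mul_self hν'.ne'
    have heqxy' : ⟪δ',β⟫ = ⟪δ',β'⟫ := by
      rw [hpq'] at hm1'
      linarith
    -- Cartan integers at δ
    obtain ⟨a1, ha1, ha10⟩ := pairR_nonpos_int hΦ hS hβ hδ hδβ.symm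
    obtain ⟨a2, ha2, ha20⟩ := pairR_nonpos_int hΦ hS hβ' hδ hδβ'.symm
    obtain ⟨b1, hb1, hb10⟩ := pairR_nonpos_int hΦ hS hβ hδ' hδ'β.symm
    obtain ⟨k1, hk1, hk10⟩ := pairR_nonpos_int hΦ hS hδ hβ hδβ
    obtain ⟨k2, hk2, hk20⟩ := pairR_nonpos_int hΦ hS hδ hβ' hδβ'
    obtain ⟨i1, hi1, hi10⟩ := pairR_nonpos_int hΦ hS hα hδ hδα.symm
    obtain ⟨l1, hl1, hl10⟩ := pairR_nonpos_int hΦ hS hδ hα hδα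
    have ha1m : (a1:ℝ) * ⟪β,β⟫ = 2*⟪δ,β⟫ := by rw [← ha1]; exact pairR_mul_self hmu.ne'
    have ha2m : (a2:ℝ) * ⟪β',β'⟫ = 2*⟪δ,β'⟫ := by rw [← ha2]; exact pairR_mul_self hmu'.ne'
    have hb1m : (b1:ℝ) * ⟪β,β⟫ = 2*⟪δ',β⟫ := by rw [← hb1]; exact pairR_mul_self hmu.ne'
    have hk1m : (k1:ℝ) * ⟪δ,δ⟫ = 2*⟪δ,β⟫ := by rw [← hk1]; exact hm1
    have hk2m : (k2:ℝ) * ⟪δ,δ⟫ = 2*⟪δ,β'⟫ := by rw [← hk2]; exact hm2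
    have hi1m : (i1:ℝ) * ⟪α,α⟫ = 2*⟪δ,α⟫ := by rw [← hi1]; exact pairR_mul_self hlam.ne'
    have hl1m : (l1:ℝ) * ⟪δ,δ⟫ = 2*⟪δ,α⟫ := by
      rw [← hl1, real_inner_comm α δ]; exact pairR_mul_self hν.ne'
    have ha1l : (a1:ℝ) * ⟪α,α⟫ = 2*⟪δ,β⟫ := by rw [← hlen1]; exact ha1m
    have ha2l : (a2:ℝ) * ⟪α,α⟫ = 4*⟪δ,β'⟫ := by
      have h5 : (a2:ℝ) * (2*⟪β',β'⟫) = 4*⟪δ,β'⟫ := by linear_combination 2*ha2m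
      rw [hlen2] at h5; exact h5
    -- a2 = 2 a1 and k2 = k1
    have ha2a1 : a2 = 2*a1 := by
      have : ((a2:ℤ):ℝ) * ⟪α,α⟫ = ((2*a1:ℤ):ℝ) * ⟪α,α⟫ := by push_cast; rw [← heqxy] at ha2l; linarith
      exact_mod_cast mul_right_cancel₀ hlam.ne' this
    have hk2k1 : k2 = k1 := by
      have : ((k2:ℤ):ℝ) * ⟪δ,δ⟫ = ((k1:ℤ):ℝ) * ⟪δ,δ⟫ := by push_cast; rw [← heqxy] at hk2m; linarith
      exact_mod_cast mul_right_cancel₀ hν.ne' this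
    have pa2k2 : a2*k2 ≤ 3 := prod_bound hLI hδ hβ' hδβ' ha2m hk2m hν
    have pi1l1 : i1*l1 ≤ 3 := prod_bound hLI hδ hα hδα hi1m hl1m hν
    rcases (show a1 = 0 ∨ a1 ≤ -1 by omega) with ha1v | ha1v
    · -- x = y = 0; only need w = 0
      rw [ha1v] at ha1l; push_cast at ha1l
      have hx0 : ⟪δ,β⟫ = 0 := by linarith
      have hy0 : ⟪δ,β'⟫ = 0 := by rw [← heqxy]; exact hx0
      refine ⟨?_, hx0, hy0⟩
      rcases (show i1 = 0 ∨ i1 ≤ -1 by omega) with hi1v | hi1v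
      · rw [hi1v] at hi1m; push_cast at hi1m; linarith
      · -- w < 0 : certificate δ + 2α + β + 2β'
        exfalso
        have hl1n : l1 ≤ -1 := by
          have : l1 ≠ 0 := by
            intro h
            have := link0 hlam.ne' hl1m hi1m h
            omega
          omega
        have e1 : (i1:ℝ) * ⟪α,α⟫ ≤ (-1:ℝ) * ⟪α,α⟫ := by
          apply mul_le_mul_of_nonneg_right _ hlam.le
          exact_mod_cast hi1v
        have e2 : (l1:ℝ) * ⟪δ,δ⟫ ≤ (-1:ℝ) * ⟪δ,δ⟫ := by
          apply mul_le_mul_of_nonneg_right _ hν.le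
          exact_mod_cast hl1n
        set z : V := (1:ℝ)•δ + (2:ℝ)•α + (1:ℝ)•β + (2:ℝ)•β' + (0:ℝ)•β' with hz
        have hzne : z ≠ 0 := by
          intro h
          rw [hz] at h
          simp only [zero_smul, add_zero] at h
          have := (indep4 hLI hδ hα hβ hβ' hδα hδβ hδβ' hαβ hαβ' hββ' h).1
          norm_num at this
        have hpos := inner_self_pos' hzne
        rw [hz, expand5] at hpos
        rw [hoββ', hx0, hy0, hlen1] at hpos
        linarith [hpos, hvab, hvab', hlen2, hi1m, hl1m, e1, e2]
    · -- x = y < 0 : forces a1 = -1, k1 = -1, ν = lam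
      exfalso
      have hk1n : k1 ≤ -1 := by
        have : k1 ≠ 0 := by
          intro h
          have := link0 hmu.ne' hk1m ha1m h
          omega
        omega
      have ha1k1 : 1 ≤ a1*k1 := by nlinarith
      have ha1v1 : a1 = -1 ∧ k1 = -1 := by
        constructor <;> nlinarith [pa2k2, ha2a1, hk2k1, ha1k1]
      obtain ⟨hA1, hK1⟩ := ha1v1
      rw [hA1] at ha1l; rw [hK1] at hk1m; push_cast at ha1l hk1m
      have hνv : ⟪δ,δ⟫ = ⟪α,α⟫ := by linarith
      rw [hνv] at hl1m
      have hl1i : l1 = i1 := by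
        have : ((l1:ℤ):ℝ) * ⟪α,α⟫ = ((i1:ℤ):ℝ) * ⟪α,α⟫ := by push_cast; linarith
        exact_mod_cast mul_right_cancel₀ hlam.ne' this
      rw [hl1i] at pi1l1
      have hi1b : -1 ≤ i1 := by nlinarith
      rcases (show i1 = 0 ∨ i1 = -1 by omega) with hi1v | hi1v
      · -- w = 0 : certificate δ + 3α + 2β + 4β'
        rw [hi1v] at hi1m; push_cast at hi1m
        set z : V := (1:ℝ)•δ + (3:ℝ)•α + (2:ℝ)•β + (4:ℝ)•β' + (0:ℝ)•β' with hz
        have hzne : z ≠ 0 := by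
          intro h
          rw [hz] at h
          simp only [zero_smul, add_zero] at h
          have := (indep4 hLI hδ hα hβ hβ' hδα hδβ hδβ' hαβ hαβ' hββ' h).1
          norm_num at this
        have hpos := inner_self_pos' hzne
        rw [hz, expand5] at hpos
        rw [hoββ', hνv, hlen1, ← heqxy] at hpos
        linarith [hpos, ha1l, hvab, hvab', hlen2, hi1m]
      · -- w = -lam/2 : certificate δ + 5α + 3β + 6β'
        rw [hi1v] at hi1m; push_cast at hi1m
        set z : V := (1:ℝ)•δ + (5:ℝ)•α + (3:ℝ)•β + (6:ℝ)•β' + (0:ℝ)•β' with hz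
        have hzne : z ≠ 0 := by
          intro h
          rw [hz] at h
          simp only [zero_smul, add_zero] at h
          have := (indep4 hLI hδ hα hβ hβ' hδα hδβ hδβ' hαβ hαβ' hββ' h).1
          norm_num at this
        have hpos := inner_self_pos' hzne
        rw [hz, expand5] at hpos
        rw [hoββ', hνv, hlen1, ← heqxy] at hpos
        linarith [hpos, ha1l, hvab, hvab', hlen2, hi1m]
  · -- ⟪δ,β⟫ > ⟪δ,β'⟫ : swap δ and δ' and use vertexAux
    exfalso
    -- derive ⟪δ',β⟫ < ⟪δ',β'⟫
    have hm1 : pairR β δ * ⟪δ,δ⟫ = 2*⟪δ,β⟫ := by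
      rw [real_inner_comm β δ]; exact pairR_mul_self hν.ne'
    have hm2 : pairR β' δ * ⟪δ,δ⟫ = 2*⟪δ,β'⟫ := by
      rw [real_inner_comm β' δ]; exact pairR_mul_self hν.ne'
    have hm1' : pairR β δ' * ⟪δ',δ'⟫ = 2*⟪δ',β⟫ := by
      rw [real_inner_comm β δ']; exact pairR_mul_self hν'.ne'
    have hm2' : pairR β' δ' * ⟪δ',δ'⟫ = 2*⟪δ',β'⟫ := by
      rw [real_inner_comm β' δ']; exact pairR_mul_self hν'.ne'
    have hd1 : 0 < pairR β δ - pairR β' δ := by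
      rcases le_or_gt (pairR β δ - pairR β' δ) 0 with hA | hA
      · exfalso
        have := mul_nonpos_of_nonpos_of_nonneg hA hν.le
        nlinarith [hm1, hm2]
      · exact hA
    have hd2 : pairR β δ' - pairR β' δ' < 0 := by linarith
    have hlt' : ⟪δ',β⟫ < ⟪δ',β'⟫ := by
      rcases le_or_gt ⟪δ',β'⟫ ⟪δ',β⟫ with hA | hA
      · exfalso
        have h6 : 0 ≤ (pairR β δ' - pairR β' δ') * ⟪δ',δ'⟫ := by nlinarith [hm1', hm2']
        nlinarith [h6, hν', hd2]
      · exact hA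
    have hδδ'2 : δ' = δ ∨ ⟪δ',δ⟫ = (0:ℝ) := by
      rcases hδδ' with h | h
      · exact Or.inl h.symm
      · exact Or.inr (by rw [real_inner_comm δ δ']; exact h)
    exact vertexAux hΦ hS hα hβ hβ' hδ' hδ hαβ hαβ' hββ' hδ'α hδ'β hδ'β' hδα hδβ hδβ'
      hoββ' hδδ'2 hlen1 hlen2 hvab hvab' hw.symm (by linarith [heq1]) (by linarith [heq2]) hlt'

end Vertex2

/- ## the main case: α fixed, β moved, Cartan values (-1,-2) -/

lemma mainCase {Φ S : Set V} (hΦ : IsRootSystem Φ) (hS : IsBase Φ S)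
    (hconn : ¬ ∃ S₁ S₂ : Set V, S₁ ∪ S₂ = S ∧ S₁.Nonempty ∧ S₂.Nonempty ∧
      S₁ ∩ S₂ = ∅ ∧ ∀ a ∈ S₁, ∀ b ∈ S₂, ⟪a, b⟫ = 0)
    (s : V → V) (hfold : IsFolding S s)
    {α β β' : V} (hα : α ∈ S) (hβ : β ∈ S) (hβ' : β' ∈ S)
    (hsα : s α = α) (hsβ : s β = β')
    (hαβ : α ≠ β) (hαβ' : α ≠ β') (hββ' : β ≠ β')
    (hv1 : pairR α β = -1) (hv2 : pairR α β' = -2)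
    (hv3 : pairR β α = -1) (hv4 : pairR β' α = -1)
    (ho : ⟪β,β'⟫ = (0:ℝ)) :
    ∃ γ₁ γ₂ γ₃ : V,
      S = {γ₁, γ₂, γ₃} ∧ γ₁ ≠ γ₂ ∧ γ₁ ≠ γ₃ ∧ γ₂ ≠ γ₃ ∧
      s γ₁ = γ₃ ∧ s γ₃ = γ₁ ∧ s γ₂ = γ₂ ∧
      pairR γ₁ γ₂ = -1 ∧ pairR γ₃ γ₂ = -1 ∧ pairR γ₂ γ₁ = -1 ∧ pairR γ₂ γ₃ = -2 ∧
      pairR γ₁ γ₃ = 0 ∧ pairR γ₃ γ₁ = 0 := by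
  obtain ⟨hmap, hinv, horth, heqf⟩ := hfold
  have hsβ' : s β' = β := by rw [← hsβ]; exact hinv β hβ
  have hlam : (0:ℝ) < ⟪α,α⟫ := inner_self_pos_of_mem hΦ hS hα
  have hmu : (0:ℝ) < ⟪β,β⟫ := inner_self_pos_of_mem hΦ hS hβ
  have hmu' : (0:ℝ) < ⟪β',β'⟫ := inner_self_pos_of_mem hΦ hS hβ'
  -- length and value data
  have hm1 : pairR α β * ⟪β,β⟫ = 2*⟪α,β⟫ := pairR_mul_self hmu.ne'
  have hm2 : pairR α β' * ⟪β',β'⟫ = 2*⟪α,β'⟫ := pairR_mul_self hmu'.ne'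
  have hm3 : pairR β α * ⟪α,α⟫ = 2*⟪α,β⟫ := by
    rw [real_inner_comm β α]; exact pairR_mul_self hlam.ne'
  have hm4 : pairR β' α * ⟪α,α⟫ = 2*⟪α,β'⟫ := by
    rw [real_inner_comm β' α]; exact pairR_mul_self hlam.ne'
  rw [hv1] at hm1; rw [hv2] at hm2; rw [hv3] at hm3; rw [hv4] at hm4
  have hvab : 2*⟪α,β⟫ = -⟪α,α⟫ := by linarith
  have hvab' : 2*⟪α,β'⟫ = -⟪α,α⟫ := by linarith
  have hlen1 : ⟪β,β⟫ = ⟪α,α⟫ := by linarith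
  have hlen2 : 2*⟪β',β'⟫ = ⟪α,α⟫ := by linarith
  -- every other vertex is orthogonal to the triple
  have hKill : ∀ δ ∈ S, δ ∉ ({β, α, β'} : Set V) →
      ⟪δ,α⟫ = 0 ∧ ⟪δ,β⟫ = 0 ∧ ⟪δ,β'⟫ = 0 := by
    intro δ hδS hnot
    simp only [Set.mem_insert_iff, Set.mem_singleton_iff] at hnot
    push_neg at hnot
    obtain ⟨hδβ, hδα, hδβ'⟩ := hnot
    have hδ'S : s δ ∈ S := hmap δ hδS
    have hδ'δ : s (s δ) = δ := hinv δ hδS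
    have hν' : (0:ℝ) < ⟪s δ, s δ⟫ := inner_self_pos_of_mem hΦ hS hδ'S
    have hδ'α : s δ ≠ α := fun h => hδα (by rw [← hδ'δ, h, hsα])
    have hδ'β : s δ ≠ β := fun h => hδβ' (by rw [← hδ'δ, h, hsβ])
    have hδ'β' : s δ ≠ β' := fun h => hδβ (by rw [← hδ'δ, h, hsβ'])
    have hδδ' : δ = s δ ∨ ⟪δ, s δ⟫ = (0:ℝ) := by
      rcases eq_or_ne (s δ) δ with h | h
      · exact Or.inl h.symm
      · right
        exact (pairR_eq_zero_iff hν'.ne').1 (horth δ hδS h)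
    have hwf : ⟪δ,α⟫ = ⟪s δ,α⟫ := by
      have h1 := heqf δ hδS α hα
      rw [hsα, pairR_sub] at h1
      have h2 : pairR δ α = pairR (s δ) α := by linarith
      have h3 : pairR δ α * ⟪α,α⟫ = 2*⟪δ,α⟫ := pairR_mul_self hlam.ne'
      have h4 : pairR (s δ) α * ⟪α,α⟫ = 2*⟪s δ,α⟫ := pairR_mul_self hlam.ne'
      rw [h2] at h3
      linarith
    have heq1 := heqf δ hδS β hβ
    rw [hsβ, pairR_sub, pairR_sub] at heq1
    have heq2 := heqf β hβ δ hδS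
    rw [hsβ, pairR_sub, pairR_sub] at heq2
    exact vertexKill hΦ hS hα hβ hβ' hδS hδ'S hαβ hαβ' hββ' hδα hδβ hδβ' hδ'α hδ'β hδ'β'
      ho hδδ' hlen1 hlen2 hvab hvab' hwf heq1 heq2
  -- hence S is exactly the triple
  have htripsub : ({β, α, β'} : Set V) ⊆ S := by
    intro x hx
    simp only [Set.mem_insert_iff, Set.mem_singleton_iff] at hx
    rcases hx with h | h | h <;> subst h <;> assumption
  have hSeq : S = ({β, α, β'} : Set V) := by
    apply Set.Subset.antisymm _ htripsub
    intro δ hδS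
    by_contra hnot
    apply hconn
    refine ⟨({β, α, β'} : Set V), S \ {β, α, β'}, ?_, ⟨β, by simp⟩, ⟨δ, hδS, hnot⟩, ?_, ?_⟩
    · exact Set.union_diff_cancel htripsub
    · ext x
      simp only [Set.mem_inter_iff, Set.mem_diff, Set.mem_empty_iff_false, iff_false]
      tauto
    · intro u hu v hv
      obtain ⟨hvS, hvnot⟩ := hv
      obtain ⟨h1, h2, h3⟩ := hKill v hvS hvnot
      simp only [Set.mem_insert_iff, Set.mem_singleton_iff] at hu
      rcases hu with h | h | h <;> rw [h]
      · rw [real_inner_comm v β]; exact h2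
      · rw [real_inner_comm v α]; exact h1
      · rw [real_inner_comm v β']; exact h3
  refine ⟨β, α, β', hSeq, hαβ.symm, hββ', hαβ', hsβ, hsβ', hsα, hv3, hv4, hv1, hv2, ?_, ?_⟩
  · unfold pairR
    rw [ho]
    simp
  · unfold pairR
    rw [real_inner_comm β β', ho]
    simp

/-- if the Dynkin diagram of the base `S` is connected (no partition into
two nonempty mutually orthogonal parts) and `s` is a folding of `S`, then either `s` is
a diagram automorphism, or `S` consists of three roots with Cartan numbers of type `B₃`,
and `s` swaps the two ends `γ₁, γ₃` and fixes the middle root `γ₂`. -/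
theorem stmt6 {V : Type*} [NormedAddCommGroup V] [InnerProductSpace ℝ V]
    [FiniteDimensional ℝ V] (Φ S : Set V)
    (hΦ : IsRootSystem Φ) (hS : IsBase Φ S)
    (hconn : ¬ ∃ S₁ S₂ : Set V, S₁ ∪ S₂ = S ∧ S₁.Nonempty ∧ S₂.Nonempty ∧
      S₁ ∩ S₂ = ∅ ∧ ∀ α ∈ S₁, ∀ β ∈ S₂, ⟪α, β⟫ = 0)
    (s : V → V) (hfold : IsFolding S s) :
    (∀ α ∈ S, ∀ β ∈ S, pairR (s α) (s β) = pairR α β) ∨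
    ∃ γ₁ γ₂ γ₃ : V,
      S = {γ₁, γ₂, γ₃} ∧ γ₁ ≠ γ₂ ∧ γ₁ ≠ γ₃ ∧ γ₂ ≠ γ₃ ∧
      s γ₁ = γ₃ ∧ s γ₃ = γ₁ ∧ s γ₂ = γ₂ ∧
      pairR γ₁ γ₂ = -1 ∧ pairR γ₃ γ₂ = -1 ∧ pairR γ₂ γ₁ = -1 ∧ pairR γ₂ γ₃ = -2 ∧
      pairR γ₁ γ₃ = 0 ∧ pairR γ₃ γ₁ = 0 := by
  by_cases hauto : ∀ α ∈ S, ∀ β ∈ S, pairR (s α) (s β) = pairR α β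
  · exact Or.inl hauto
  right
  push_neg at hauto
  obtain ⟨α, hαS, β, hβS, hne⟩ := hauto
  have hLI := hS.2.1
  have hmap := hfold.1
  have hinv := hfold.2.1
  have horth := hfold.2.2.1
  have heqf := hfold.2.2.2
  have hα'S : s α ∈ S := hmap α hαS
  have hβ'S : s β ∈ S := hmap β hβS
  have hlam : (0:ℝ) < ⟪α,α⟫ := inner_self_pos_of_mem hΦ hS hαS
  have hmu : (0:ℝ) < ⟪β,β⟫ := inner_self_pos_of_mem hΦ hS hβS
  have hlam' : (0:ℝ) < ⟪s α, s α⟫ := inner_self_pos_of_mem hΦ hS hα'S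
  have hmu' : (0:ℝ) < ⟪s β, s β⟫ := inner_self_pos_of_mem hΦ hS hβ'S
  -- s β ≠ β
  have hsββ : s β ≠ β := by
    intro h
    apply hne
    have h1 := heqf α hαS β hβS
    rw [h, pairR_sub] at h1
    have h2 : pairR (s α) β = pairR α β := by linarith
    rw [h, h2]
  by_cases hsαα : s α = α
  · -- main case
    have hβα : β ≠ α := by
      intro h
      exact hne (by rw [h, hsαα])
    have hsβα : s β ≠ α := by
      intro h
      exact hβα (by rw [← hinv β hβS, h, hsαα])
    have hoβ : ⟪β, s β⟫ = (0:ℝ) :=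
      (pairR_eq_zero_iff hmu'.ne').1 (horth β hβS hsββ)
    have heqPQ := heqf β hβS α hαS
    rw [hsαα, pairR_sub] at heqPQ
    have hPQ : pairR β α = pairR (s β) α := by linarith
    obtain ⟨p, hp, hp0⟩ := pairR_nonpos_int hΦ hS hβS hαS hβα
    obtain ⟨q, hq, hq0⟩ := pairR_nonpos_int hΦ hS hβ'S hαS hsβα
    obtain ⟨P, hP, hP0⟩ := pairR_nonpos_int hΦ hS hαS hβS hβα.symm
    obtain ⟨Q, hQ, hQ0⟩ := pairR_nonpos_int hΦ hS hαS hβ'S hsβα.symm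
    have hpq : p ≠ q := by
      intro h
      apply hne
      rw [hsαα, hq, hp, h]
    have hPQi : P = Q := by
      rw [hP, hQ] at hPQ
      exact_mod_cast hPQ
    have hpm : (p:ℝ) * ⟪β,β⟫ = 2*⟪α,β⟫ := by rw [← hp]; exact pairR_mul_self hmu.ne'
    have hqm : (q:ℝ) * ⟪s β, s β⟫ = 2*⟪α,s β⟫ := by rw [← hq]; exact pairR_mul_self hmu'.ne'
    have hPm : (P:ℝ) * ⟪α,α⟫ = 2*⟪α,β⟫ := by
      rw [← hP, real_inner_comm β α]; exact pairR_mul_self hlam.ne'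
    have hQm : (Q:ℝ) * ⟪α,α⟫ = 2*⟪α,s β⟫ := by
      rw [← hQ, real_inner_comm (s β) α]; exact pairR_mul_self hlam.ne'
    have hPn : P ≤ -1 := by
      rcases eq_or_lt_of_le hP0 with h | h
      · exfalso
        have hpz : p = 0 := link0 hmu.ne' hPm hpm h
        have hqz : q = 0 := link0 hmu'.ne' hQm hqm (by omega)
        exact hpq (by omega)
      · omega
    have hpn : p ≤ -1 := by
      have : p ≠ 0 := by
        intro h
        have := link0 hlam.ne' hpm hPm h
        omega
      omega
    have hqn : q ≤ -1 := by
      have : q ≠ 0 := by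
        intro h
        have := link0 hlam.ne' hqm hQm h
        omega
      omega
    have hps : p*P + q*Q ≤ 3 :=
      pairsum_bound hLI hαS hβS hβ'S hβα.symm hsβα.symm (Ne.symm hsββ) hoβ hpm hPm hqm hQm hlam
    rw [← hPQi] at hps
    have hpqsum : p + q ≤ -3 := by omega
    have hP1 : -1 ≤ P := by nlinarith [hps, hpqsum, hPn, hpn, hqn]
    have hPv : P = -1 := by omega
    rw [hPv] at hps
    have hpqv : (p = -1 ∧ q = -2) ∨ (p = -2 ∧ q = -1) := by omega
    have hv3 : pairR β α = -1 := by rw [hP, hPv]; norm_num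
    have hv4 : pairR (s β) α = -1 := by rw [hQ, ← hPQi, hPv]; norm_num
    rcases hpqv with ⟨hpv, hqv⟩ | ⟨hpv, hqv⟩
    · exact mainCase hΦ hS hconn s hfold hαS hβS hβ'S hsαα rfl hβα.symm hsβα.symm
        (Ne.symm hsββ) (by rw [hp, hpv]; norm_num) (by rw [hq, hqv]; norm_num) hv3 hv4 hoβ
    · exact mainCase hΦ hS hconn s hfold hαS hβ'S hβS hsαα (hinv β hβS) hsβα.symm hβα.symm
        hsββ (by rw [hq, hqv]; norm_num) (by rw [hp, hpv]; norm_num) hv4 hv3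
        (by rw [real_inner_comm β (s β)]; exact hoβ)
  · -- both α and β moved : contradiction via caseB'
    exfalso
    have hααs : α ≠ s α := fun h => hsαα h.symm
    have hoα : ⟪α, s α⟫ = (0:ℝ) :=
      (pairR_eq_zero_iff hlam'.ne').1 (horth α hαS (fun h => hsαα h))
    have hoβ : ⟪β, s β⟫ = (0:ℝ) :=
      (pairR_eq_zero_iff hmu'.ne').1 (horth β hβS hsββ)
    have hαβne : α ≠ β := by
      intro h
      apply hne
      rw [← h, pairR_self hlam.ne', pairR_self hlam'.ne']
    have hβsα : β ≠ s α := by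
      intro h
      apply hne
      have hsβeq : s β = α := by rw [h, hinv α hαS]
      have h1 : pairR α β = 0 := by
        rw [h]
        exact (pairR_eq_zero_iff hlam'.ne').2 hoα
      have h2 : pairR (s α) (s β) = 0 := by
        rw [hsβeq, ← h]
        apply (pairR_eq_zero_iff hlam.ne').2
        rw [real_inner_comm α β, h]
        exact hoα
      rw [h1, h2]
    have hsβα : s β ≠ α := by
      intro h
      exact hβsα (by rw [← hinv β hβS, h])
    have hsβsα : s β ≠ s α := by
      intro h
      exact hαβne (by rw [← hinv α hαS, ← h, hinv β hβS])
    have heq1 := heqf α hαS β hβS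
    rw [pairR_sub, pairR_sub] at heq1
    have heq2 := heqf β hβS α hαS
    rw [pairR_sub, pairR_sub] at heq2
    rcases lt_trichotomy (pairR (s α) (s β)) (pairR α β) with hd | hd | hd
    · exact caseB' hΦ hS hαS hα'S hβS hβ'S hααs hαβne (Ne.symm hsβα) (Ne.symm hβsα)
        (Ne.symm hsβsα) (Ne.symm hsββ) hoα hoβ heq1 heq2 hd
    · exact hne hd
    · have hd' : pairR (s α) β < pairR α (s β) := by linarith
      exact caseB' hΦ hS hαS hα'S hβ'S hβS hααs (Ne.symm hsβα) hαβne (Ne.symm hsβsα)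
        (Ne.symm hβsα) hsββ hoα (by rw [real_inner_comm β (s β)]; exact hoβ)
        (by linarith) (by linarith) hd'
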